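/- Let (X, φ) be a permutation rack and T ⊆ X a subset meeting every orbit of φ. Then for n ≥ 1, every n-chain in CR_n(X, φ) is, modulo boundaries (i.e., modulo the image of d : CR_{n+1} → CR_n), a ℤ-linear combination of monomials x₁⋯x_n with x₁ ∈ T. -/

import Mathlib

/-- Rack chains: free abelian group on `n`-tuples. -/
abbrev CR (X : Type) (n : ℕ) : Type := (Fin n → X) →₀ ℤ

/-- The monomial basis element. -/
noncomputable def mon {X : Type} {n : ℕ} (w : Fin n → X) : CR X n := Finsupp.single w 1

/-- Delete the `(i+1)`-st entry (1-indexed `k = i+1`). -/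
def del {X : Type} {n : ℕ} (w : Fin (n+1) → X) (i : Fin n) : Fin n → X :=
  fun j => if (j : ℕ) < (i : ℕ) then w j.castSucc else w j.succ

/-- Delete the `(i+1)`-st entry and act with it on all later entries. -/
def act {X : Type} (op : X → X → X) {n : ℕ} (w : Fin (n+1) → X) (i : Fin n) : Fin n → X :=
  fun j => if (j : ℕ) < (i : ℕ) then w j.castSucc else op (w i.castSucc) (w j.succ)

/-- Rack differential on a monomial. -/
noncomputable def dMon {X : Type} (op : X → X → X) {n : ℕ} (w : Fin (n+1) → X) : CR X n :=
  ∑ i : Fin n, ((-1 : ℤ) ^ (i : ℕ)) • (mon (del w i) - mon (act op w i))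

/-- The rack differential `CR_{n+1} → CR_n`. -/
noncomputable def d {X : Type} (op : X → X → X) (n : ℕ) : CR X (n+1) →+ CR X n :=
  Finsupp.liftAddHom fun w => zmultiplesHom _ (dMon op w)

/-- Left concatenation `w ↦ x·w`. -/
noncomputable def consHom {X : Type} (x : X) (n : ℕ) : CR X n →+ CR X (n+1) :=
  Finsupp.liftAddHom fun w => zmultiplesHom _ (mon (Fin.cons x w))

/-- Diagonal action of a map `φ` on chains. -/
noncomputable def mapChains {X : Type} (φ : X → X) (n : ℕ) : CR X n →+ CR X n :=
  Finsupp.liftAddHom fun w => zmultiplesHom _ (mon (φ ∘ w))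

/-- Cycles. -/
noncomputable def ZC {X : Type} (op : X → X → X) : (n : ℕ) → AddSubgroup (CR X n)
  | 0 => ⊤
  | (m+1) => (d op m).ker

/-- Boundaries. -/
noncomputable def BC {X : Type} (op : X → X → X) (n : ℕ) : AddSubgroup (CR X n) :=
  (d op n).range

/-- Rack homology. -/
abbrev HR (X : Type) (op : X → X → X) (n : ℕ) : Type :=
  ZC op n ⧸ ((BC op n).addSubgroupOf (ZC op n))

/-- The rack operation of a permutation rack. -/
def permOp {X : Type} (φ : X ≃ X) : X → X → X := fun _ y => φ y

/-- Multiplication by an element of `ℤX`. -/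
noncomputable def mulChain {X : Type} (v : X →₀ ℤ) (n : ℕ) : CR X n →+ CR X (n+1) :=
  ∑ x ∈ v.support, v x • consHom x n

-- auxiliary lemmas

lemma hom_ext' {X : Type} {m : ℕ} {M : Type*} [AddCommGroup M] (f g : CR X m →+ M)
    (h : ∀ w, f (mon w) = g (mon w)) : f = g := by
  apply Finsupp.addHom_ext
  intro w a
  have : (Finsupp.single w a : CR X m) = a • mon w := by
    simp [mon, Finsupp.smul_single]
  rw [this, map_zsmul, map_zsmul, h]

lemma d_mon {X : Type} (op : X → X → X) {n : ℕ} (w : Fin (n+1) → X) :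
    d op n (mon w) = dMon op w := by
  simp [d, mon, Finsupp.liftAddHom_apply_single]

lemma consHom_mon {X : Type} (x : X) {n : ℕ} (w : Fin n → X) :
    consHom x n (mon w) = mon (Fin.cons x w) := by
  simp [consHom, mon, Finsupp.liftAddHom_apply_single]

lemma mapChains_mon {X : Type} (f : X → X) {n : ℕ} (w : Fin n → X) :
    mapChains f n (mon w) = mon (f ∘ w) := by
  simp [mapChains, mon, Finsupp.liftAddHom_apply_single]

lemma del_cons_zero {X : Type} {n : ℕ} (x : X) (u : Fin (n+1) → X) :
    del (Fin.cons x u) 0 = u := by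
  funext j; simp [del]

lemma act_cons_zero {X : Type} {n : ℕ} (φ : X ≃ X) (x : X) (u : Fin (n+1) → X) :
    act (permOp φ) (Fin.cons x u) 0 = ⇑φ ∘ u := by
  funext j; simp [act, permOp]

lemma del_cons_succ {X : Type} {n : ℕ} (x : X) (u : Fin (n+1) → X) (j : Fin n) :
    del (Fin.cons x u) j.succ = Fin.cons x (del u j) := by
  funext k
  induction k using Fin.cases with
  | zero => simp [del]
  | succ m =>
    simp only [del, Fin.val_succ, Nat.succ_lt_succ_iff, Fin.cons_succ]
    split
    · rw [← Fin.succ_castSucc, Fin.cons_succ]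
    · rfl

lemma act_cons_succ {X : Type} {n : ℕ} (φ : X ≃ X) (x : X) (u : Fin (n+1) → X) (j : Fin n) :
    act (permOp φ) (Fin.cons x u) j.succ = Fin.cons x (act (permOp φ) u j) := by
  funext k
  induction k using Fin.cases with
  | zero => simp [act]
  | succ m =>
    simp only [act, Fin.val_succ, Nat.succ_lt_succ_iff, Fin.cons_succ, permOp]
    split
    · rw [← Fin.succ_castSucc, Fin.cons_succ]
    · rfl

lemma dMon_cons {X : Type} (φ : X ≃ X) {n : ℕ} (x : X) (u : Fin (n+1) → X) :
    dMon (permOp φ) (Fin.cons x u) =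
      mon u - mon (⇑φ ∘ u) - consHom x n (dMon (permOp φ) u) := by
  rw [dMon, Fin.sum_univ_succ]
  rw [dMon, map_sum]
  simp only [del_cons_zero, act_cons_zero, del_cons_succ, act_cons_succ, Fin.val_succ,
    pow_succ, Fin.val_zero, pow_zero, one_smul, map_zsmul, map_sub, consHom_mon]
  simp only [mul_neg_one, neg_smul, Finset.sum_neg_distrib]
  abel


lemma consHom_eq_mapDomain {X : Type} (x : X) {n : ℕ} (b : CR X n) :
    consHom x n b = Finsupp.mapDomain (fun w : Fin n → X => (Fin.cons x w : Fin (n+1) → X)) b := by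
  have : consHom x n =
      Finsupp.mapDomain.addMonoidHom (fun w : Fin n → X => (Fin.cons x w : Fin (n+1) → X)) := by
    apply hom_ext'
    intro w
    rw [consHom_mon, Finsupp.mapDomain.addMonoidHom_apply, mon, mon, Finsupp.mapDomain_single]
  rw [this]; rfl

lemma mapChains_eq_mapDomain {X : Type} (f : X → X) {n : ℕ} (c : CR X n) :
    mapChains f n c = Finsupp.mapDomain (fun w => f ∘ w) c := by
  have : mapChains f n = Finsupp.mapDomain.addMonoidHom (fun w : Fin n → X => f ∘ w) := by
    apply hom_ext'
    intro w
    rw [mapChains_mon, Finsupp.mapDomain.addMonoidHom_apply, mon, mon, Finsupp.mapDomain_single]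
  rw [this]; rfl

lemma mapChains_comp {X : Type} (f g : X → X) {n : ℕ} (c : CR X n) :
    mapChains f n (mapChains g n c) = mapChains (f ∘ g) n c := by
  simp only [mapChains_eq_mapDomain]
  rw [← Finsupp.mapDomain_comp]
  rfl

lemma mapChains_id {X : Type} {n : ℕ} (c : CR X n) : mapChains id n c = c := by
  rw [mapChains_eq_mapDomain]
  have : (fun w : Fin n → X => id ∘ w) = id := rfl
  rw [this, Finsupp.mapDomain_id]

/-- Chains all of whose monomials start in `T`. -/
noncomputable def FT {X : Type} (T : Set X) (n : ℕ) : AddSubgroup (CR X (n+1)) :=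
  (Finsupp.supported ℤ ℤ {w : Fin (n+1) → X | w 0 ∈ T}).toAddSubgroup

lemma consHom_mem_FT {X : Type} {T : Set X} {x : X} (hx : x ∈ T) {n : ℕ} (b : CR X n) :
    consHom x n b ∈ FT T n := by
  classical
  rw [consHom_eq_mapDomain]
  refine Finsupp.mem_supported ℤ _ |>.2 ?_
  intro w hw
  obtain ⟨v, _, rfl⟩ := Finset.mem_image.1 (Finsupp.mapDomain_support hw)
  simpa using hx

lemma sub_mapChains {X : Type} (φ : X ≃ X) {n : ℕ} (x : X) (c : CR X (n+1)) :
    c - mapChains (⇑φ) (n+1) c =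
      d (permOp φ) (n+1) (consHom x (n+1) c) + consHom x n (d (permOp φ) n c) := by
  have h : AddMonoidHom.id (CR X (n+1)) - mapChains (⇑φ) (n+1) =
      (d (permOp φ) (n+1)).comp (consHom x (n+1)) + (consHom x n).comp (d (permOp φ) n) := by
    apply hom_ext'
    intro w
    simp only [AddMonoidHom.sub_apply, AddMonoidHom.id_apply, AddMonoidHom.add_apply,
      AddMonoidHom.coe_comp, Function.comp_apply, mapChains_mon, consHom_mon, d_mon,
      dMon_cons]
    abel
  have := congrArg (fun f => f c) h
  simpa using this

lemma claimA {X : Type} (φ : X ≃ X) {T : Set X} {x : X} (hx : x ∈ T) {n : ℕ}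
    (c : CR X (n+1)) :
    c - mapChains (⇑φ) (n+1) c ∈ BC (permOp φ) (n+1) ⊔ FT T n := by
  rw [sub_mapChains φ x c]
  refine add_mem (AddSubgroup.mem_sup_left ?_) (AddSubgroup.mem_sup_right ?_)
  · exact ⟨_, rfl⟩
  · exact consHom_mem_FT hx _

lemma claimB {X : Type} (φ : X ≃ X) {T : Set X} {x : X} (hx : x ∈ T) {n : ℕ}
    (k : ℤ) (c : CR X (n+1)) :
    c - mapChains (⇑(φ ^ k)) (n+1) c ∈ BC (permOp φ) (n+1) ⊔ FT T n := by
  have key : ∀ m : ℤ, ∀ c : CR X (n+1),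
      mapChains (⇑(φ ^ (m+1))) (n+1) c = mapChains ⇑φ (n+1) (mapChains (⇑(φ ^ m)) (n+1) c) := by
    intro m c
    have hfun : (⇑(φ ^ (m+1)) : X → X) = ⇑φ ∘ ⇑(φ ^ m) := by
      funext y
      have : φ ^ (m+1) = φ * φ ^ m := by
        rw [show m + 1 = 1 + m by ring, zpow_add, zpow_one]
      simp [this]
    rw [mapChains_comp, hfun]
  induction k using Int.induction_on with
  | zero =>
    have : (⇑(φ ^ (0:ℤ)) : X → X) = id := by funext y; simp
    rw [this, mapChains_id, sub_self]
    exact zero_mem _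
  | succ k ih =>
    have h2 := claimA φ hx (mapChains (⇑(φ ^ (k:ℤ))) (n+1) c)
    have h3 := add_mem ih h2
    rw [← key (k:ℤ) c] at h3
    simpa using h3
  | pred k ih =>
    have h2 := neg_mem (claimA φ hx (mapChains (⇑(φ ^ (-(k:ℤ)-1))) (n+1) c))
    rw [← key (-(k:ℤ)-1) c, show -(k:ℤ)-1+1 = -(k:ℤ) by ring] at h2
    have h3 := add_mem ih h2
    have e : c - mapChains (⇑(φ ^ (-(k:ℤ)-1))) (n+1) c =
        (c - mapChains (⇑(φ ^ (-(k:ℤ)))) (n+1) c) +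
          -(mapChains (⇑(φ ^ (-(k:ℤ)-1))) (n+1) c - mapChains (⇑(φ ^ (-(k:ℤ)))) (n+1) c) := by
      abel
    rw [e]
    exact h3

/-- If `T ⊆ X` meets every orbit of `φ`, then every chain of degree `≥ 1` is, modulo
boundaries, a `ℤ`-linear combination of monomials whose first entry lies in `T`. -/
theorem chains_start_in_T_mod_boundaries (X : Type) (φ : X ≃ X) (T : Set X)
    (hT : ∀ x : X, ∃ k : ℤ, (φ ^ k) x ∈ T) (n : ℕ) (c : CR X (n+1)) :
    ∃ c' : CR X (n+1), c - c' ∈ BC (permOp φ) (n+1) ∧ ∀ w ∈ c'.support, w 0 ∈ T := by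
  have hmem : c ∈ BC (permOp φ) (n+1) ⊔ FT T n := by
    induction c using Finsupp.induction_linear with
    | zero => exact zero_mem _
    | add f g hf hg => exact add_mem hf hg
    | single w a =>
      have hsa : (Finsupp.single w a : CR X (n+1)) = a • mon w := by
        simp [mon, Finsupp.smul_single]
      rw [hsa]
      refine zsmul_mem ?_ a
      obtain ⟨k, hk⟩ := hT (w 0)
      have h1 := claimB φ hk k (mon w)
      have h2 : mapChains (⇑(φ ^ k)) (n+1) (mon w) ∈ FT T n := by
        rw [mapChains_mon]
        refine Finsupp.mem_supported ℤ _ |>.2 ?_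
        intro v hv
        have hv' : v ∈ ({⇑(φ ^ k) ∘ w} : Finset (Fin (n+1) → X)) :=
          Finsupp.support_single_subset hv
        rw [Finset.mem_singleton] at hv'
        subst hv'
        simpa using hk
      have h3 := add_mem h1 (AddSubgroup.mem_sup_right h2)
      simpa using h3
  rcases AddSubgroup.mem_sup.1 hmem with ⟨b, hb, f, hf, hbf⟩
  refine ⟨f, ?_, ?_⟩
  · rw [← hbf]
    simpa using hb
  · intro w hw
    exact Finsupp.mem_supported ℤ f |>.1 hf hw
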